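/- For every real α>−1, lim_{q→1⁻} (1−q²)^{(α+1)/2} · c_α = 1/√(Γ(α+1)), where c_α = sqrt( (−q^{−2α−1};q²)_∞ (−q^{2α+3};q²)_∞ (q^{2α+2};q²)_∞ / (2(1−q) (−q;q²)_∞ (−q;q²)_∞ (q²;q²)_∞) ). -/

import Mathlib

open scoped BigOperators
open Real Filter

noncomputable section

/-- q-shifted factorial `(a;q)_n`. -/
def qPoch (a q : ℝ) (n : ℕ) : ℝ := ∏ k ∈ Finset.range n, (1 - a * q ^ k)

/-- infinite q-shifted factorial `(a;q)_∞`. -/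
def qPochInf (a q : ℝ) : ℝ := ∏' k : ℕ, (1 - a * q ^ k)

/-- q-number `⟦x⟧_q = (1-q^x)/(1-q)`. -/
def qNumber (q x : ℝ) : ℝ := (1 - q ^ x) / (1 - q)

/-- generalized q-integer `⟦n⟧_{q,α}`: equals `⟦n⟧_q` for even `n` and
`⟦n+2α+1⟧_q` for odd `n` (so `⟦2m+1⟧_{q,α} = ⟦2m+2α+2⟧_q`). -/
def qNumAlpha (q α : ℝ) (n : ℕ) : ℝ :=
  if n % 2 = 0 then qNumber q n else qNumber q (n + 2 * α + 1)

/-- generalized q-factorial `n!_{q,α}`. -/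
def qFactAlpha (q α : ℝ) (n : ℕ) : ℝ := ∏ k ∈ Finset.range n, qNumAlpha q α (k + 1)

/-- generalized q-shifted factorial `(q;q)_{n,α} = (1-q)^n n!_{q,α}`. -/
def qPochAlpha (q α : ℝ) (n : ℕ) : ℝ := (1 - q) ^ n * qFactAlpha q α n

/-- generalized discrete q-Hermite II polynomials `h̃_{n,α}(x;q)`. -/
def hTilde (q α : ℝ) (n : ℕ) (x : ℝ) : ℝ :=
  qPoch q q n * ∑ k ∈ Finset.range (n / 2 + 1),
    (-1 : ℝ) ^ k * q ^ ((k * (2 * k + 1) : ℤ) - (2 * n * k : ℤ)) * x ^ (n - 2 * k) /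
      (qPoch (q ^ 2) (q ^ 2) k * qPochAlpha q α (n - 2 * k))

/-- the weight `ω_α(x;q) = e_{q²}(-q^{-2α-1}x²) = 1/∏_{k≥0}(1+q^{-2α-1}x²q^{2k})`. -/
def omegaAlpha (q α x : ℝ) : ℝ :=
  (∏' k : ℕ, (1 + q ^ (-(2 * α + 1)) * x ^ 2 * q ^ (2 * k)))⁻¹

/-- normalization constant `c_α`. -/
def cAlpha (q α : ℝ) : ℝ :=
  Real.sqrt (qPochInf (-q ^ (-(2 * α + 1))) (q ^ 2) * qPochInf (-q ^ (2 * α + 3)) (q ^ 2) *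
      qPochInf (q ^ (2 * α + 2)) (q ^ 2) /
    (2 * (1 - q) *
      (qPochInf (-q) (q ^ 2) * qPochInf (-q) (q ^ 2) * qPochInf (q ^ 2) (q ^ 2))))

/-- normalization constant `d_{n,α} = c_α q^{n²/2} (q;q)_{n,α}^{1/2} / (q;q)_n`. -/
def dAlpha (q α : ℝ) (n : ℕ) : ℝ :=
  cAlpha q α * q ^ (((n : ℝ) ^ 2) / 2) * Real.sqrt (qPochAlpha q α n) / qPoch q q n

/-- the (q,α)-deformed Hermite functions `φ_n^α(x;q)`. -/
def phiQ (q α : ℝ) (n : ℕ) (x : ℝ) : ℝ :=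
  dAlpha q α n * Real.sqrt (omegaAlpha q α x) * hTilde q α n x

/-- parity indicator `θ(n)`: 1 if `n` is odd, 0 if `n` is even. -/
def theta (n : ℕ) : ℝ := if n % 2 = 1 then 1 else 0

/-- the q-Gamma function `Γ_q(z) = (q;q)_∞ / (q^z;q)_∞ · (1-q)^{1-z}`. -/
def qGammaF (q z : ℝ) : ℝ := qPochInf q q / qPochInf (q ^ z) q * (1 - q) ^ (1 - z)

/-- Rosenblum generalized factorial `γ_ν(n)`. -/
def gammaGen (ν : ℝ) (n : ℕ) : ℝ :=
  2 ^ n * (Nat.factorial (n / 2) : ℝ) *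
    Real.Gamma (ν + (((n + 1) / 2 : ℕ) : ℝ) + 1 / 2) / Real.Gamma (ν + 1 / 2)

/-- generalized Hermite polynomials `H_n^ν(x)`. -/
def HGen (ν : ℝ) (n : ℕ) (x : ℝ) : ℝ :=
  (Nat.factorial n : ℝ) * ∑ k ∈ Finset.range (n / 2 + 1),
    (-1 : ℝ) ^ k * (2 * x) ^ (n - 2 * k) / ((Nat.factorial k : ℝ) * gammaGen ν (n - 2 * k))

/-- Rosenblum generalized Hermite functions `φ_n^ν(x)`. -/
def phiGen (ν : ℝ) (n : ℕ) (x : ℝ) : ℝ :=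
  Real.sqrt (gammaGen ν n / Real.Gamma (ν + 1 / 2)) * Real.exp (-x ^ 2 / 2) *
    HGen ν n x / ((2 : ℝ) ^ ((n : ℝ) / 2) * (Nat.factorial n : ℝ))

/-- symmetric q-number `[x]_s = (s^x - s^{-x})/(s - s^{-1})`. -/
def qNumSym (s x : ℝ) : ℝ := (s ^ x - s ^ (-x)) / (s - s⁻¹)

/-- Euler q-exponential `e_q(z) = Σ z^k/(q;q)_k`. -/
def eExp (q z : ℝ) : ℝ := ∑' k : ℕ, z ^ k / qPoch q q k

/-- generalized q-exponential `E_{q,α}(z) = Σ q^{k(k-1)/2} z^k/(q;q)_{k,α}`. -/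
def bigEAlpha (q α z : ℝ) : ℝ := ∑' k : ℕ, q ^ (k * (k - 1) / 2) * z ^ k / qPochAlpha q α k

/-- generalized q-exponential `e_{q,α}(z) = Σ z^k/(q;q)_{k,α}`. -/
def eExpAlpha (q α z : ℝ) : ℝ := ∑' k : ℕ, z ^ k / qPochAlpha q α k


namespace QAux

variable {q : ℝ}

/-- the filter `q → 1⁻` within `(0,1)` -/
abbrev F1 : Filter ℝ := nhdsWithin 1 (Set.Ioo (0:ℝ) 1)

lemma eventually_mem : ∀ᶠ q in F1, q ∈ Set.Ioo (0:ℝ) 1 :=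
  eventually_mem_nhdsWithin

lemma tendsto_id_F1 : Tendsto (fun q : ℝ => q) F1 (nhds 1) :=
  tendsto_id.mono_left nhdsWithin_le_nhds

/-- `(1 - q^x)/(1-q) → x` as `q → 1⁻`. -/
lemma tendsto_qnum (x : ℝ) :
    Tendsto (fun q : ℝ => (1 - q ^ x) / (1 - q)) F1 (nhds x) := by
  have hd : HasDerivAt (fun y : ℝ => y ^ x) (x * (1:ℝ) ^ (x - 1)) 1 :=
    Real.hasDerivAt_rpow_const (Or.inl one_ne_zero)
  rw [Real.one_rpow, mul_one] at hd
  have hs := hasDerivAt_iff_tendsto_slope.mp hd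
  have hmono : F1 ≤ nhdsWithin 1 {(1:ℝ)}ᶜ := by
    apply nhdsWithin_mono
    intro y hy
    exact ne_of_lt hy.2
  have := hs.mono_left hmono
  apply this.congr'
  filter_upwards [eventually_mem] with q hq
  have hq1 : q ≠ 1 := ne_of_lt hq.2
  rw [slope_def_field]
  rw [Real.one_rpow]
  rw [div_eq_div_iff (sub_ne_zero.mpr hq1) (sub_ne_zero.mpr (Ne.symm hq1))]
  ring

/-- `q^x → 1` as `q → 1⁻`. -/
lemma tendsto_rpow_one (x : ℝ) :
    Tendsto (fun q : ℝ => q ^ x) F1 (nhds 1) := by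
  have h := (Real.continuousAt_rpow_const 1 x (Or.inl one_ne_zero)).tendsto
  rw [Real.one_rpow] at h
  exact h.comp tendsto_id_F1

/-- per-factor log-convexity inequality -/
lemma log_factor_concave {q : ℝ} (hq0 : 0 < q) (hq1 : q < 1)
    {x₀ x₁ l : ℝ} (hx₀ : 0 < x₀) (hx₁ : 0 < x₁) (hl0 : 0 ≤ l) (hl1 : l ≤ 1) :
    (1 - l) * log (1 - q ^ x₀) + l * log (1 - q ^ x₁)
      ≤ log (1 - q ^ ((1 - l) * x₀ + l * x₁)) := by
  have hA : 0 < 1 - q ^ x₀ := by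
    have := Real.rpow_lt_one hq0.le hq1 hx₀; linarith
  have hB : 0 < 1 - q ^ x₁ := by
    have := Real.rpow_lt_one hq0.le hq1 hx₁; linarith
  have key : (1 - q ^ x₀) ^ (1 - l) * (1 - q ^ x₁) ^ l
      ≤ 1 - q ^ ((1 - l) * x₀ + l * x₁) := by
    have hgm := Real.geom_mean_le_arith_mean2_weighted (by linarith : (0:ℝ) ≤ 1 - l)
      hl0 hA.le hB.le (by ring)
    refine hgm.trans ?_
    have hconv := convexOn_exp.2 (Set.mem_univ (x₀ * log q)) (Set.mem_univ (x₁ * log q))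
      (by linarith : (0:ℝ) ≤ 1 - l) hl0 (by ring)
    rw [Real.rpow_def_of_pos hq0, Real.rpow_def_of_pos hq0, Real.rpow_def_of_pos hq0]
    have e1 : log q * ((1 - l) * x₀ + l * x₁)
        = (1 - l) * (x₀ * log q) + l * (x₁ * log q) := by ring
    rw [e1, mul_comm (log q) x₀, mul_comm (log q) x₁]
    simp only [smul_eq_mul] at hconv
    linarith
  calc (1 - l) * log (1 - q ^ x₀) + l * log (1 - q ^ x₁)
      = log ((1 - q ^ x₀) ^ (1 - l) * (1 - q ^ x₁) ^ l) := by
        rw [Real.log_mul (by positivity) (by positivity),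
          Real.log_rpow hA, Real.log_rpow hB]
  _ ≤ log (1 - q ^ ((1 - l) * x₀ + l * x₁)) := by
      apply Real.log_le_log (by positivity) key

lemma factor_pos (hq0 : 0 < q) (hq1 : q < 1) {a : ℝ} (ha : a < 1) (k : ℕ) :
    0 < 1 - a * q ^ k := by
  have h1 : q ^ k ≤ 1 := pow_le_one₀ hq0.le hq1.le
  have h2 : 0 < q ^ k := pow_pos hq0 k
  rcases le_or_gt a 0 with h | h
  · nlinarith
  · nlinarith

lemma summable_geom_mul (hq0 : 0 < q) (hq1 : q < 1) (a : ℝ) :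
    Summable fun k : ℕ => a * q ^ k :=
  (summable_geometric_of_lt_one hq0.le hq1).mul_left a

lemma abs_log_le {x m : ℝ} (hm : 0 < m) (hm1 : m ≤ 1) (hx : m ≤ x) :
    |log x| ≤ |x - 1| / m := by
  have hx0 : 0 < x := lt_of_lt_of_le hm hx
  rcases le_or_gt 1 x with h | h
  · rw [abs_of_nonneg (log_nonneg h), abs_of_nonneg (by linarith)]
    calc log x ≤ x - 1 := log_le_sub_one_of_pos hx0
    _ ≤ (x - 1) / m := by
        rw [le_div_iff₀ hm]; nlinarith
  · rw [abs_of_nonpos (log_nonpos hx0.le h.le), abs_of_neg (by linarith)]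
    have h2 : log x⁻¹ ≤ x⁻¹ - 1 := log_le_sub_one_of_pos (by positivity)
    rw [log_inv] at h2
    have h3 : x⁻¹ - 1 = (1 - x) / x := by field_simp
    rw [h3] at h2
    calc -log x ≤ (1 - x) / x := h2
    _ ≤ (1 - x) / m := div_le_div_of_nonneg_left (by linarith) hm hx
    _ = -(x - 1) / m := by ring

lemma summable_log (hq0 : 0 < q) (hq1 : q < 1) {a : ℝ} (ha : a < 1) :
    Summable fun k : ℕ => log (1 - a * q ^ k) := by
  set m : ℝ := min 1 (1 - a) with hm
  have hm0 : 0 < m := lt_min one_pos (by linarith)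
  have hm1 : m ≤ 1 := min_le_left _ _
  apply Summable.of_abs
  have hgeom : Summable fun k : ℕ => (|a| / m) * q ^ k :=
    (summable_geometric_of_lt_one hq0.le hq1).mul_left _
  apply Summable.of_nonneg_of_le (fun k => abs_nonneg _) ?_ hgeom
  intro k
  have hk : m ≤ 1 - a * q ^ k := by
    have h1 : q ^ k ≤ 1 := pow_le_one₀ hq0.le hq1.le
    have h2 : 0 < q ^ k := pow_pos hq0 k
    rcases le_or_gt a 0 with h | h
    · have : m ≤ 1 := hm1
      nlinarith
    · have : m ≤ 1 - a := min_le_right _ _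
      nlinarith
  have := abs_log_le hm0 hm1 hk
  calc |log (1 - a * q ^ k)| ≤ |(1 - a * q ^ k) - 1| / m := this
  _ = |a| * q ^ k / m := by
      rw [show (1 - a * q ^ k) - 1 = -(a * q ^ k) by ring, abs_neg, abs_mul,
        abs_of_nonneg (pow_nonneg hq0.le k)]
  _ = |a| / m * q ^ k := by ring

lemma qPochInf_eq_exp (hq0 : 0 < q) (hq1 : q < 1) {a : ℝ} (ha : a < 1) :
    qPochInf a q = rexp (∑' k : ℕ, log (1 - a * q ^ k)) := by
  have := Real.rexp_tsum_eq_tprod (f := fun k : ℕ => 1 - a * q ^ k)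
    (fun k => factor_pos hq0 hq1 ha k)
    (summable_log hq0 hq1 ha)
  exact this.symm

lemma qPochInf_pos (hq0 : 0 < q) (hq1 : q < 1) {a : ℝ} (ha : a < 1) :
    0 < qPochInf a q := by
  rw [qPochInf_eq_exp hq0 hq1 ha]; exact exp_pos _

lemma multipliable_poch (hq0 : 0 < q) (hq1 : q < 1) {a : ℝ} (ha : a < 1) :
    Multipliable fun k : ℕ => 1 - a * q ^ k :=
  Real.multipliable_of_summable_log
    (fun k => factor_pos hq0 hq1 ha k)
    (summable_log hq0 hq1 ha)

lemma mul_lt_one_aux (hq0 : 0 < q) (hq1 : q < 1) {a : ℝ} (ha : a < 1) : a * q < 1 := by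
  nlinarith

lemma qPochInf_peel (hq0 : 0 < q) (hq1 : q < 1) {a : ℝ} (ha : a < 1) :
    qPochInf a q = (1 - a) * qPochInf (a * q) q := by
  have hm : Multipliable fun k : ℕ => 1 - a * q ^ (k + 1) := by
    have := multipliable_poch hq0 hq1 (mul_lt_one_aux hq0 hq1 ha)
    apply this.congr
    intro k; ring_nf
  have := tprod_eq_zero_mul' (f := fun k : ℕ => 1 - a * q ^ k) hm
  rw [qPochInf, this]
  simp only [pow_zero, mul_one]
  congr 1
  rw [qPochInf]
  apply tprod_congr
  intro k; ring_nf

lemma rpow_lt_one' (hq0 : 0 < q) (hq1 : q < 1) {z : ℝ} (hz : 0 < z) : q ^ z < 1 :=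
  Real.rpow_lt_one hq0.le hq1 hz

lemma qGammaF_pos (hq0 : 0 < q) (hq1 : q < 1) {z : ℝ} (hz : 0 < z) :
    0 < qGammaF q z := by
  unfold qGammaF
  have h1 : 0 < qPochInf q q := qPochInf_pos hq0 hq1 hq1
  have h2 : 0 < qPochInf (q ^ z) q := qPochInf_pos hq0 hq1 (rpow_lt_one' hq0 hq1 hz)
  have h3 : (0:ℝ) < 1 - q := by linarith
  positivity

lemma qGammaF_one (hq0 : 0 < q) (hq1 : q < 1) : qGammaF q 1 = 1 := by
  unfold qGammaF
  rw [Real.rpow_one, sub_self, Real.rpow_zero, mul_one,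
    div_self (qPochInf_pos hq0 hq1 hq1).ne']

lemma qGammaF_succ (hq0 : 0 < q) (hq1 : q < 1) {z : ℝ} (hz : 0 < z) :
    qGammaF q (z + 1) = (1 - q ^ z) / (1 - q) * qGammaF q z := by
  unfold qGammaF
  have hzlt : q ^ z < 1 := rpow_lt_one' hq0 hq1 hz
  have hpeel : qPochInf (q ^ z) q = (1 - q ^ z) * qPochInf (q ^ (z + 1)) q := by
    rw [qPochInf_peel hq0 hq1 hzlt, Real.rpow_add_one hq0.ne' z]
  have he : (1:ℝ) - (z + 1) = (1 - z) - 1 := by ring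
  rw [he, Real.rpow_sub (by linarith : (0:ℝ) < 1 - q), Real.rpow_one, hpeel]
  have h2 : 0 < qPochInf (q ^ (z + 1)) q :=
    qPochInf_pos hq0 hq1 (rpow_lt_one' hq0 hq1 (by linarith))
  have h3 : (0:ℝ) < 1 - q := by linarith
  have h4 : 0 < 1 - q ^ z := by linarith
  field_simp

lemma qGammaF_shift (hq0 : 0 < q) (hq1 : q < 1) {z : ℝ} (hz : 0 < z) (n : ℕ) :
    qGammaF q (z + n) = qGammaF q z *
      ∏ j ∈ Finset.range n, ((1 - q ^ (z + j)) / (1 - q)) := by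
  induction n with
  | zero => simp
  | succ n ih =>
    have h1 : z + ((n:ℝ) + 1) = (z + n) + 1 := by ring
    have h2 : (0:ℝ) < z + n := by positivity
    rw [Nat.cast_add, Nat.cast_one, h1, qGammaF_succ hq0 hq1 h2, ih,
      Finset.prod_range_succ]
    ring

lemma log_factor_concave' (hq0 : 0 < q) (hq1 : q < 1)
    {z₀ z₁ l : ℝ} (h0 : 0 < z₀) (h1 : 0 < z₁) (hl0 : 0 ≤ l) (hl1 : l ≤ 1) (k : ℕ) :
    (1 - l) * log (1 - q ^ z₀ * q ^ k) + l * log (1 - q ^ z₁ * q ^ k)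
      ≤ log (1 - q ^ ((1 - l) * z₀ + l * z₁) * q ^ k) := by
  have e : ∀ z : ℝ, q ^ z * q ^ k = q ^ (z + k) := fun z => by
    rw [← Real.rpow_natCast q k, ← Real.rpow_add hq0]
  rw [e z₀, e z₁, e ((1 - l) * z₀ + l * z₁)]
  have key := log_factor_concave hq0 hq1 (x₀ := z₀ + k) (x₁ := z₁ + k)
    (by positivity) (by positivity) hl0 hl1
  have e2 : (1 - l) * (z₀ + k) + l * (z₁ + k) = (1 - l) * z₀ + l * z₁ + k := by ring
  rw [e2] at key
  exact key

lemma qGammaF_convex (hq0 : 0 < q) (hq1 : q < 1)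
    {z₀ z₁ l : ℝ} (h0 : 0 < z₀) (h1 : 0 < z₁) (hl0 : 0 ≤ l) (hl1 : l ≤ 1) :
    qGammaF q ((1 - l) * z₀ + l * z₁)
      ≤ qGammaF q z₀ ^ (1 - l) * qGammaF q z₁ ^ l := by
  have hq' : (0:ℝ) < 1 - q := by linarith
  set zl := (1 - l) * z₀ + l * z₁ with hzl
  have hzlpos : 0 < zl := by
    have hmin : 0 < min z₀ z₁ := lt_min h0 h1
    have hle : min z₀ z₁ ≤ zl := by
      have a1 : 0 ≤ (1 - l) * (z₀ - min z₀ z₁) :=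
        mul_nonneg (by linarith) (sub_nonneg.mpr (min_le_left z₀ z₁))
      have a2 : 0 ≤ l * (z₁ - min z₀ z₁) :=
        mul_nonneg hl0 (sub_nonneg.mpr (min_le_right z₀ z₁))
      rw [hzl]; nlinarith
    linarith
  -- log-level inequality
  have hsum : ∀ z : ℝ, 0 < z → Summable fun k : ℕ => log (1 - q ^ z * q ^ k) :=
    fun z hz => summable_log hq0 hq1 (rpow_lt_one' hq0 hq1 hz)
  have hts : (1 - l) * (∑' k : ℕ, log (1 - q ^ z₀ * q ^ k))
      + l * (∑' k : ℕ, log (1 - q ^ z₁ * q ^ k))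
      ≤ ∑' k : ℕ, log (1 - q ^ zl * q ^ k) := by
    rw [← tsum_mul_left, ← tsum_mul_left,
      ← Summable.tsum_add ((hsum z₀ h0).mul_left _) ((hsum z₁ h1).mul_left _)]
    apply Summable.tsum_le_tsum _ (((hsum z₀ h0).mul_left _).add ((hsum z₁ h1).mul_left _))
      (hsum zl hzlpos)
    intro k
    exact log_factor_concave' hq0 hq1 h0 h1 hl0 hl1 k
  -- assemble
  have hPz : ∀ z : ℝ, 0 < z →
      qPochInf (q ^ z) q = rexp (∑' k : ℕ, log (1 - q ^ z * q ^ k)) :=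
    fun z hz => qPochInf_eq_exp hq0 hq1 (rpow_lt_one' hq0 hq1 hz)
  have hPq : 0 < qPochInf q q := qPochInf_pos hq0 hq1 hq1
  unfold qGammaF
  rw [hPz z₀ h0, hPz z₁ h1, hPz zl hzlpos, ← Real.exp_log hPq,
    Real.rpow_def_of_pos hq', Real.rpow_def_of_pos hq', Real.rpow_def_of_pos hq']
  simp only [div_eq_mul_inv, ← Real.exp_neg, ← Real.exp_add, ← Real.exp_mul]
  rw [Real.exp_le_exp]
  have e0 : log (1 - q) * (1 - zl)
      = (1 - l) * (log (1 - q) * (1 - z₀)) + l * (log (1 - q) * (1 - z₁)) := by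
    rw [hzl]; ring
  nlinarith [hts, e0]
lemma qnum_pos (hq0 : 0 < q) (hq1 : q < 1) {x : ℝ} (hx : 0 < x) :
    0 < (1 - q ^ x) / (1 - q) := by
  have h1 : q ^ x < 1 := Real.rpow_lt_one hq0.le hq1 hx
  have h2 : (0:ℝ) < 1 - q := by linarith
  exact div_pos (by linarith) h2

/-- upper Bohr–Mollerup bound -/
lemma bm_upper (hq0 : 0 < q) (hq1 : q < 1) {s : ℝ} (hs0 : 0 < s) (hs1 : s ≤ 1) (n : ℕ) :
    qGammaF q (((n:ℝ) + 1) + s)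
      ≤ qGammaF q ((n:ℝ) + 1) * ((1 - q ^ ((n:ℝ) + 1)) / (1 - q)) ^ s := by
  set N : ℝ := (n:ℝ) + 1 with hN
  have hNpos : 0 < N := by positivity
  have hc := qGammaF_convex hq0 hq1 (z₀ := N) (z₁ := N + 1) (l := s)
    hNpos (by positivity) hs0.le hs1
  have e : (1 - s) * N + s * (N + 1) = N + s := by ring
  rw [e] at hc
  refine hc.trans ?_
  rw [qGammaF_succ hq0 hq1 hNpos]
  have hγ : 0 < qGammaF q N := qGammaF_pos hq0 hq1 hNpos
  have hnum : 0 < (1 - q ^ N) / (1 - q) := qnum_pos hq0 hq1 hNpos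
  rw [Real.mul_rpow hnum.le hγ.le]
  have key : qGammaF q N ^ (1 - s) * qGammaF q N ^ s = qGammaF q N := by
    rw [← Real.rpow_add hγ]; norm_num
  refine le_of_eq ?_
  linear_combination ((1 - q ^ N) / (1 - q)) ^ s * key

/-- lower Bohr–Mollerup bound -/
lemma bm_lower (hq0 : 0 < q) (hq1 : q < 1) {s : ℝ} (hs0 : 0 < s) (hs1 : s ≤ 1) (n : ℕ) :
    qGammaF q ((n:ℝ) + 1) * ((1 - q ^ ((n:ℝ) + 1)) / (1 - q))
        * ((1 - q ^ (((n:ℝ) + 1) + s)) / (1 - q)) ^ (s - 1)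
      ≤ qGammaF q (((n:ℝ) + 1) + s) := by
  set N : ℝ := (n:ℝ) + 1 with hN
  have hNpos : 0 < N := by positivity
  have hNs : 0 < N + s := by positivity
  have hc := qGammaF_convex hq0 hq1 (z₀ := N + s) (z₁ := N + s + 1) (l := 1 - s)
    hNs (by positivity) (by linarith) (by linarith)
  have e : (1 - (1 - s)) * (N + s) + (1 - s) * (N + s + 1) = N + 1 := by ring
  rw [e] at hc
  have e2 : (1 : ℝ) - (1 - s) = s := by ring
  rw [e2] at hc
  rw [qGammaF_succ hq0 hq1 hNs] at hc
  have hγ : 0 < qGammaF q (N + s) := qGammaF_pos hq0 hq1 hNs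
  have hnum : 0 < (1 - q ^ (N + s)) / (1 - q) := qnum_pos hq0 hq1 hNs
  have hc2 : qGammaF q (N + 1) ≤ qGammaF q (N + s) * ((1 - q ^ (N + s)) / (1 - q)) ^ (1 - s) := by
    refine hc.trans (le_of_eq ?_)
    rw [Real.mul_rpow hnum.le hγ.le]
    have key : qGammaF q (N + s) ^ s * qGammaF q (N + s) ^ (1 - s) = qGammaF q (N + s) := by
      rw [← Real.rpow_add hγ]; norm_num
    linear_combination ((1 - q ^ (N + s)) / (1 - q)) ^ (1 - s) * key
  rw [qGammaF_succ hq0 hq1 hNpos] at hc2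
  -- multiply both sides by ((1-q^(N+s))/(1-q))^(s-1)
  have key := mul_le_mul_of_nonneg_right hc2
    (Real.rpow_nonneg hnum.le (s - 1))
  calc qGammaF q N * ((1 - q ^ N) / (1 - q)) * ((1 - q ^ (N + s)) / (1 - q)) ^ (s - 1)
      = (1 - q ^ N) / (1 - q) * qGammaF q N * ((1 - q ^ (N + s)) / (1 - q)) ^ (s - 1) := by
        ring
  _ ≤ qGammaF q (N + s) * ((1 - q ^ (N + s)) / (1 - q)) ^ (1 - s)
        * ((1 - q ^ (N + s)) / (1 - q)) ^ (s - 1) := key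
  _ = qGammaF q (N + s) := by
      rw [mul_assoc, ← Real.rpow_add hnum, show (1 - s) + (s - 1) = 0 by ring,
        Real.rpow_zero, mul_one]
/-- double-indexed squeeze -/
lemma squeeze_param {α : Type*} {F : Filter α} {g : α → ℝ} {L : ℝ} {l u : ℕ → α → ℝ}
    {ln un : ℕ → ℝ}
    (hl : ∀ n, Tendsto (l n) F (nhds (ln n))) (hu : ∀ n, Tendsto (u n) F (nhds (un n)))
    (hln : Tendsto ln atTop (nhds L)) (hun : Tendsto un atTop (nhds L))
    (h : ∀ n, ∀ᶠ x in F, l n x ≤ g x ∧ g x ≤ u n x) :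
    Tendsto g F (nhds L) := by
  rw [tendsto_order]
  constructor
  · intro a ha
    obtain ⟨n, hn⟩ := (hln.eventually (lt_mem_nhds ha)).exists
    filter_upwards [(hl n).eventually (lt_mem_nhds hn), h n] with x hx1 hx2
    exact lt_of_lt_of_le hx1 hx2.1
  · intro a ha
    obtain ⟨n, hn⟩ := (hun.eventually (gt_mem_nhds ha)).exists
    filter_upwards [(hu n).eventually (gt_mem_nhds hn), h n] with x hx1 hx2
    exact lt_of_le_of_lt hx2.2 hx1

section slimit
variable {s : ℝ} (hs0 : 0 < s) (hs1 : s ≤ 1)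

/-- q → 1⁻ limit of the lower/upper BM bounds -/
lemma tendsto_gammaN (n : ℕ) :
    Tendsto (fun q : ℝ => ∏ j ∈ Finset.range n, ((1 - q ^ (1 + (j:ℝ))) / (1 - q))) F1
      (nhds (∏ j ∈ Finset.range n, (1 + (j:ℝ)))) :=
  tendsto_finset_prod _ (fun j _ => tendsto_qnum (1 + (j:ℝ)))

lemma tendsto_Bq (n : ℕ) :
    Tendsto (fun q : ℝ => ∏ j ∈ Finset.range (n+1), ((1 - q ^ (s + (j:ℝ))) / (1 - q))) F1
      (nhds (∏ j ∈ Finset.range (n+1), (s + (j:ℝ)))) :=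
  tendsto_finset_prod _ (fun j _ => tendsto_qnum (s + (j:ℝ)))

include hs0 in
lemma prodB_pos (n : ℕ) : 0 < ∏ j ∈ Finset.range (n+1), (s + (j:ℝ)) :=
  Finset.prod_pos (fun j _ => add_pos_of_pos_of_nonneg hs0 (Nat.cast_nonneg j))

lemma gammaN_eq (hq0 : 0 < q) (hq1 : q < 1) (n : ℕ) :
    qGammaF q ((n:ℝ) + 1)
      = ∏ j ∈ Finset.range n, ((1 - q ^ (1 + (j:ℝ))) / (1 - q)) := by
  have := qGammaF_shift hq0 hq1 (z := 1) one_pos n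
  rw [qGammaF_one hq0 hq1, one_mul] at this
  rw [← this, add_comm]

include hs0 hs1 in
lemma gammaS_bounds (hq0 : 0 < q) (hq1 : q < 1) (n : ℕ) :
    (∏ j ∈ Finset.range n, ((1 - q ^ (1 + (j:ℝ))) / (1 - q)))
        * ((1 - q ^ ((n:ℝ) + 1)) / (1 - q))
        * ((1 - q ^ (((n:ℝ) + 1) + s)) / (1 - q)) ^ (s - 1)
        / (∏ j ∈ Finset.range (n+1), ((1 - q ^ (s + (j:ℝ))) / (1 - q)))
      ≤ qGammaF q s ∧
    qGammaF q s ≤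
      (∏ j ∈ Finset.range n, ((1 - q ^ (1 + (j:ℝ))) / (1 - q)))
        * ((1 - q ^ ((n:ℝ) + 1)) / (1 - q)) ^ s
        / (∏ j ∈ Finset.range (n+1), ((1 - q ^ (s + (j:ℝ))) / (1 - q))) := by
  have hB : 0 < ∏ j ∈ Finset.range (n+1), ((1 - q ^ (s + (j:ℝ))) / (1 - q)) :=
    Finset.prod_pos (fun j _ => qnum_pos hq0 hq1 (by positivity))
  have hshift : qGammaF q (((n:ℝ) + 1) + s)
      = qGammaF q s * ∏ j ∈ Finset.range (n+1), ((1 - q ^ (s + (j:ℝ))) / (1 - q)) := by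
    have := qGammaF_shift hq0 hq1 hs0 (n+1)
    rw [← this]
    congr 1
    push_cast
    ring
  constructor
  · rw [div_le_iff₀ hB, ← hshift, ← gammaN_eq hq0 hq1 n]
    exact bm_lower hq0 hq1 hs0 hs1 n
  · rw [le_div_iff₀ hB, ← hshift, ← gammaN_eq hq0 hq1 n]
    exact bm_upper hq0 hq1 hs0 hs1 n

include hs0 in
lemma tendsto_frac : Tendsto (fun n : ℕ => (s + ((n:ℝ) + 1)) / ((n:ℝ) + 1)) atTop (nhds 1) := by
  have h1 : Tendsto (fun n : ℕ => (n:ℝ) + 1) atTop atTop :=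
    tendsto_atTop_add_const_right _ 1 tendsto_natCast_atTop_atTop
  have h2 : Tendsto (fun n : ℕ => s / ((n:ℝ) + 1)) atTop (nhds 0) :=
    Tendsto.div_atTop tendsto_const_nhds h1
  have h3 := h2.add_const 1
  rw [zero_add] at h3
  apply h3.congr
  intro n
  have : ((n:ℝ) + 1) ≠ 0 := by positivity
  field_simp

include hs0 in
lemma tendsto_uinf :
    Tendsto (fun n : ℕ => (∏ j ∈ Finset.range n, (1 + (j:ℝ))) * ((n:ℝ) + 1) ^ s
      / (∏ j ∈ Finset.range (n+1), (s + (j:ℝ)))) atTop (nhds (Real.Gamma s)) := by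
  have key : ∀ n : ℕ, (∏ j ∈ Finset.range n, (1 + (j:ℝ))) * ((n:ℝ) + 1) ^ s
      / (∏ j ∈ Finset.range (n+1), (s + (j:ℝ)))
      = Real.GammaSeq s (n+1) * ((s + ((n:ℝ) + 1)) / ((n:ℝ) + 1)) := by
    intro n
    rw [Real.GammaSeq]
    have e1 : ∏ j ∈ Finset.range n, (1 + (j:ℝ)) = (Nat.factorial n : ℝ) := by
      rw [← Finset.prod_range_add_one_eq_factorial n]
      push_cast
      exact Finset.prod_congr rfl (fun j _ => by ring)
    rw [e1]
    have e2 : ∏ j ∈ Finset.range (n+1+1), (s + (j:ℝ))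
        = (∏ j ∈ Finset.range (n+1), (s + (j:ℝ))) * (s + ((n:ℝ)+1)) := by
      rw [Finset.prod_range_succ]
      push_cast
      ring
    rw [e2]
    have hP : (0:ℝ) < ∏ j ∈ Finset.range (n+1), (s + (j:ℝ)) := prodB_pos hs0 n
    have hfact : (Nat.factorial (n+1) : ℝ) = ((n:ℝ)+1) * (Nat.factorial n : ℝ) := by
      rw [Nat.factorial_succ]; push_cast; ring
    have hcast : ((n+1 : ℕ) : ℝ) = (n:ℝ) + 1 := by push_cast; ring
    rw [hcast, hfact]
    have h1 : ((n:ℝ) + 1) ≠ 0 := by positivity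
    have h2 : (s + ((n:ℝ)+1)) ≠ 0 := by positivity
    field_simp
  rw [tendsto_congr key]
  have h1 : Tendsto (fun n : ℕ => Real.GammaSeq s (n+1)) atTop (nhds (Real.Gamma s)) :=
    (Real.GammaSeq_tendsto_Gamma s).comp (tendsto_add_atTop_nat 1)
  have := h1.mul (tendsto_frac hs0)
  rwa [mul_one] at this

include hs0 in
lemma tendsto_linf :
    Tendsto (fun n : ℕ => (∏ j ∈ Finset.range n, (1 + (j:ℝ))) * ((n:ℝ) + 1)
      * (((n:ℝ) + 1 + s)) ^ (s - 1)
      / (∏ j ∈ Finset.range (n+1), (s + (j:ℝ)))) atTop (nhds (Real.Gamma s)) := by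
  have key : ∀ n : ℕ, (∏ j ∈ Finset.range n, (1 + (j:ℝ))) * ((n:ℝ) + 1)
      * (((n:ℝ) + 1 + s)) ^ (s - 1) / (∏ j ∈ Finset.range (n+1), (s + (j:ℝ)))
      = ((∏ j ∈ Finset.range n, (1 + (j:ℝ))) * ((n:ℝ) + 1) ^ s
        / (∏ j ∈ Finset.range (n+1), (s + (j:ℝ))))
        * ((((n:ℝ) + 1 + s) / ((n:ℝ) + 1)) ^ (s - 1)) := by
    intro n
    have hx : (0:ℝ) < (n:ℝ) + 1 := by positivity
    have hy : (0:ℝ) < (n:ℝ) + 1 + s := by positivity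
    have hP : (0:ℝ) < ∏ j ∈ Finset.range (n+1), (s + (j:ℝ)) := prodB_pos hs0 n
    rw [Real.div_rpow hy.le hx.le]
    have key2 : ((n:ℝ) + 1) ^ s = ((n:ℝ)+1) ^ (s-1) * ((n:ℝ)+1) := by
      nth_rewrite 3 [← Real.rpow_one ((n:ℝ)+1)]
      rw [← Real.rpow_add hx]
      norm_num
    rw [key2]
    have h1 : ((n:ℝ)+1) ^ (s-1) ≠ 0 := by positivity
    field_simp
  rw [tendsto_congr key]
  have hfrac : Tendsto (fun n : ℕ => ((n:ℝ) + 1 + s) / ((n:ℝ) + 1)) atTop (nhds 1) := by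
    have := tendsto_frac hs0
    apply this.congr
    intro n; ring_nf
  have h2 : Tendsto (fun n : ℕ => (((n:ℝ) + 1 + s) / ((n:ℝ) + 1)) ^ (s - 1)) atTop
      (nhds 1) := by
    have := hfrac.rpow_const (p := s - 1) (Or.inl one_ne_zero)
    rwa [Real.one_rpow] at this
  have := (tendsto_uinf hs0).mul h2
  rwa [mul_one] at this

include hs0 hs1 in
lemma tendsto_qGammaF_s : Tendsto (fun q : ℝ => qGammaF q s) F1 (nhds (Real.Gamma s)) := by
  apply squeeze_param
    (l := fun n q => (∏ j ∈ Finset.range n, ((1 - q ^ (1 + (j:ℝ))) / (1 - q)))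
        * ((1 - q ^ ((n:ℝ) + 1)) / (1 - q))
        * ((1 - q ^ (((n:ℝ) + 1) + s)) / (1 - q)) ^ (s - 1)
        / (∏ j ∈ Finset.range (n+1), ((1 - q ^ (s + (j:ℝ))) / (1 - q))))
    (u := fun n q => (∏ j ∈ Finset.range n, ((1 - q ^ (1 + (j:ℝ))) / (1 - q)))
        * ((1 - q ^ ((n:ℝ) + 1)) / (1 - q)) ^ s
        / (∏ j ∈ Finset.range (n+1), ((1 - q ^ (s + (j:ℝ))) / (1 - q))))
    (ln := fun n => (∏ j ∈ Finset.range n, (1 + (j:ℝ))) * ((n:ℝ) + 1)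
        * (((n:ℝ) + 1 + s)) ^ (s - 1) / (∏ j ∈ Finset.range (n+1), (s + (j:ℝ))))
    (un := fun n => (∏ j ∈ Finset.range n, (1 + (j:ℝ))) * ((n:ℝ) + 1) ^ s
        / (∏ j ∈ Finset.range (n+1), (s + (j:ℝ))))
  · intro n
    apply Tendsto.div
    · apply Tendsto.mul
      · exact (tendsto_gammaN n).mul (tendsto_qnum ((n:ℝ) + 1))
      · exact (tendsto_qnum (((n:ℝ) + 1) + s)).rpow_const (Or.inl (by positivity))
    · exact tendsto_Bq n
    · exact (prodB_pos hs0 n).ne'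
  · intro n
    apply Tendsto.div
    · exact (tendsto_gammaN n).mul
        ((tendsto_qnum ((n:ℝ) + 1)).rpow_const (Or.inl (by positivity)))
    · exact tendsto_Bq n
    · exact (prodB_pos hs0 n).ne'
  · exact tendsto_linf hs0
  · exact tendsto_uinf hs0
  · intro n
    filter_upwards [eventually_mem_nhdsWithin] with q hq
    exact gammaS_bounds hs0 hs1 hq.1 hq.2 n

end slimit

lemma Gamma_shift {s : ℝ} (hs : 0 < s) (m : ℕ) :
    Real.Gamma (s + m) = Real.Gamma s * ∏ j ∈ Finset.range m, (s + (j:ℝ)) := by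
  induction m with
  | zero => simp
  | succ m ih =>
    have h1 : s + ((m:ℝ) + 1) = (s + m) + 1 := by ring
    push_cast
    rw [h1, Real.Gamma_add_one (by positivity), ih, Finset.prod_range_succ]
    push_cast
    ring

/-- main part-1 result -/
lemma tendsto_qGammaF {z : ℝ} (hz : 0 < z) :
    Tendsto (fun q : ℝ => qGammaF q z) F1 (nhds (Real.Gamma z)) := by
  set m : ℕ := ⌈z⌉₊ - 1 with hm
  have hceil : 1 ≤ ⌈z⌉₊ := Nat.ceil_pos.mpr hz
  have hmz : (m:ℝ) = (⌈z⌉₊ : ℝ) - 1 := by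
    rw [hm, Nat.cast_sub hceil, Nat.cast_one]
  set s : ℝ := z - m with hs
  have hs0 : 0 < s := by
    have := Nat.ceil_lt_add_one hz.le
    rw [hs, hmz]; linarith
  have hs1 : s ≤ 1 := by
    have := Nat.le_ceil z
    rw [hs, hmz]; linarith
  have hzeq : z = s + m := by rw [hs]; ring
  have heq : ∀ᶠ q in F1, qGammaF q s * ∏ j ∈ Finset.range m, ((1 - q ^ (s + (j:ℝ))) / (1 - q))
      = qGammaF q z := by
    filter_upwards [eventually_mem_nhdsWithin] with q hq
    rw [← qGammaF_shift hq.1 hq.2 hs0 m, ← hzeq]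
  have hlim : Tendsto (fun q : ℝ => qGammaF q s
      * ∏ j ∈ Finset.range m, ((1 - q ^ (s + (j:ℝ))) / (1 - q))) F1
      (nhds (Real.Gamma s * ∏ j ∈ Finset.range m, (s + (j:ℝ)))) :=
    (tendsto_qGammaF_s hs0 hs1).mul
      (tendsto_finset_prod _ (fun j _ => tendsto_qnum (s + (j:ℝ))))
  have := hlim.congr' heq
  rwa [← Gamma_shift hs0 m, ← hzeq] at this

/-- `(1 - q^c)/(1 - q²) → c/2` -/
lemma tendsto_qnum2 (c : ℝ) :
    Tendsto (fun q : ℝ => (1 - q ^ c) / (1 - q ^ (2:ℕ))) F1 (nhds (c / 2)) := by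
  have h := (tendsto_qnum c).div (tendsto_qnum 2) two_ne_zero
  apply h.congr'
  filter_upwards [eventually_mem_nhdsWithin] with q hq
  have h1 : (1:ℝ) - q ≠ 0 := sub_ne_zero.mpr (ne_of_gt hq.2)
  have h2 : q ^ (2:ℝ) = q ^ (2:ℕ) := by
    rw [← Real.rpow_natCast q 2]; norm_num
  have h3 : (1:ℝ) - q ^ (2:ℕ) ≠ 0 := by
    have : q ^ (2:ℕ) < 1 := pow_lt_one₀ hq.1.le hq.2 two_ne_zero
    intro h; linarith [this]
  simp only [Pi.div_apply]
  rw [h2]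
  field_simp

/-- pointwise two-sided bound -/
lemma t_ineq (hq0 : 0 < q) {u v w x : ℝ} (hu : 0 < u) (hv : 0 < v)
    (huv : u * v = q^2) (hw : w = u + v - 2*q) (hwnn : 0 ≤ w)
    (hx0 : 0 < x) :
    2 * log (1 + q*x) ≤ log (1 + u*x) + log (1 + v*x) ∧
    log (1 + u*x) + log (1 + v*x) ≤ 2 * log (1 + q*x) + w*x := by
  have p1 : (0:ℝ) < 1 + u*x := by positivity
  have p2 : (0:ℝ) < 1 + v*x := by positivity
  have p3 : (0:ℝ) < 1 + q*x := by positivity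
  have hprod : (1 + u*x) * (1 + v*x) = (1 + q*x) * (1 + q*x) + w*x := by
    linear_combination x^2 * huv - x * hw
  constructor
  · have hle : (1 + q*x) * (1 + q*x) ≤ (1 + u*x) * (1 + v*x) := by
      rw [hprod]; nlinarith
    have := Real.log_le_log (by positivity) hle
    rw [Real.log_mul p1.ne' p2.ne', Real.log_mul p3.ne' p3.ne'] at this
    linarith
  · have hle : (1 + u*x) * (1 + v*x) ≤ ((1 + q*x) * (1 + q*x)) * (1 + w*x) := by
      rw [hprod]
      have haux : 0 ≤ w*x*(2*(q*x) + (q*x)^2) :=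
        mul_nonneg (mul_nonneg hwnn hx0.le) (by positivity)
      nlinarith [haux]
    have h4 := Real.log_le_log (by positivity) hle
    rw [Real.log_mul p1.ne' p2.ne',
      Real.log_mul (by positivity : ((1+q*x)*(1+q*x) : ℝ) ≠ 0) (by positivity : (1+w*x:ℝ) ≠ 0),
      Real.log_mul p3.ne' p3.ne'] at h4
    have h5 : log (1 + w*x) ≤ w*x := by
      have := Real.log_le_sub_one_of_pos (show (0:ℝ) < 1 + w*x by positivity)
      linarith
    linarith

section theta
variable {α : ℝ}

/-- the log-sum for the theta ratio -/
def thS (α q : ℝ) : ℝ :=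
    (∑' k : ℕ, log (1 + q ^ (-(2*α+1)) * (q^2) ^ k))
  + (∑' k : ℕ, log (1 + q ^ (2*α+3) * (q^2) ^ k))
  - 2 * (∑' k : ℕ, log (1 + q * (q^2) ^ k))

lemma thS_bounds (hq0 : 0 < q) (hq1 : q < 1) :
    0 ≤ thS α q ∧ thS α q ≤ (q ^ (-(2*α+1)) + q ^ (2*α+3) - 2*q) * (1 - q^2)⁻¹ := by
  set u : ℝ := q ^ (-(2*α+1)) with hu
  set v : ℝ := q ^ (2*α+3) with hv
  have hupos : 0 < u := Real.rpow_pos_of_pos hq0 _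
  have hvpos : 0 < v := Real.rpow_pos_of_pos hq0 _
  have hQ0 : 0 < q^2 := pow_pos hq0 2
  have hQ1 : q^2 < 1 := pow_lt_one₀ hq0.le hq1 two_ne_zero
  have huv : u * v = q^2 := by
    rw [hu, hv, ← Real.rpow_add hq0]
    rw [show -(2*α+1) + (2*α+3) = ((2:ℕ):ℝ) by push_cast; ring, Real.rpow_natCast]
  have hsqrt : Real.sqrt u * Real.sqrt v = q := by
    rw [← Real.sqrt_mul hupos.le, huv, Real.sqrt_sq hq0.le]
  set w : ℝ := u + v - 2*q with hw
  have hwnn : 0 ≤ w := by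
    nlinarith [sq_nonneg (Real.sqrt u - Real.sqrt v), Real.sq_sqrt hupos.le,
      Real.sq_sqrt hvpos.le, hsqrt]
  -- summabilities (in `1 + c * y^k` form)
  have conv : ∀ c : ℝ, 0 < c → (Summable fun k : ℕ => log (1 + c * (q^2) ^ k)) := by
    intro c hc
    have := summable_log hQ0 hQ1 (a := -c) (by linarith)
    apply this.congr
    intro k; simp [neg_mul, sub_neg_eq_add]
  have hsu := conv u hupos
  have hsv := conv v hvpos
  have hsq := conv q hq0
  have hgeom : Summable fun k : ℕ => w * (q^2) ^ k :=
    (summable_geometric_of_lt_one hQ0.le hQ1).mul_left w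
  have hT := fun k : ℕ => t_ineq hq0 hupos hvpos huv hw hwnn (pow_pos hQ0 k)
  -- lower bound
  have hlow : 2 * (∑' k : ℕ, log (1 + q * (q^2) ^ k))
      ≤ (∑' k : ℕ, log (1 + u * (q^2) ^ k)) + (∑' k : ℕ, log (1 + v * (q^2) ^ k)) := by
    rw [← tsum_mul_left, ← Summable.tsum_add hsu hsv]
    exact Summable.tsum_le_tsum (fun k => (hT k).1) (hsq.mul_left 2) (hsu.add hsv)
  -- upper bound
  have hup : (∑' k : ℕ, log (1 + u * (q^2) ^ k)) + (∑' k : ℕ, log (1 + v * (q^2) ^ k))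
      ≤ 2 * (∑' k : ℕ, log (1 + q * (q^2) ^ k)) + w * (1 - q^2)⁻¹ := by
    have h1 : (∑' k : ℕ, log (1 + u * (q^2) ^ k)) + (∑' k : ℕ, log (1 + v * (q^2) ^ k))
        ≤ ∑' k : ℕ, (2 * log (1 + q * (q^2) ^ k) + w * (q^2) ^ k) := by
      rw [← Summable.tsum_add hsu hsv]
      exact Summable.tsum_le_tsum (fun k => (hT k).2) (hsu.add hsv) ((hsq.mul_left 2).add hgeom)
    rw [Summable.tsum_add (hsq.mul_left 2) hgeom, tsum_mul_left, tsum_mul_left,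
      tsum_geometric_of_lt_one hQ0.le hQ1] at h1
    exact h1
  unfold thS
  rw [← hu, ← hv]
  constructor <;> linarith

/-- the exponential identity: the product ratio equals `exp (thS α q)` -/
lemma ratio_eq_exp (hα : -1 < α) (hq0 : 0 < q) (hq1 : q < 1) :
    qPochInf (-q ^ (-(2*α+1))) (q^2) * qPochInf (-q ^ (2*α+3)) (q^2)
      / (qPochInf (-q) (q^2) * qPochInf (-q) (q^2)) = rexp (thS α q) := by
  have hQ0 : 0 < q^2 := pow_pos hq0 2
  have hQ1 : q^2 < 1 := pow_lt_one₀ hq0.le hq1 two_ne_zero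
  have hupos : 0 < q ^ (-(2*α+1)) := Real.rpow_pos_of_pos hq0 _
  have hvpos : 0 < q ^ (2*α+3) := Real.rpow_pos_of_pos hq0 _
  have e1 := qPochInf_eq_exp hQ0 hQ1 (a := -q ^ (-(2*α+1))) (by linarith)
  have e2 := qPochInf_eq_exp hQ0 hQ1 (a := -q ^ (2*α+3)) (by linarith)
  have e3 := qPochInf_eq_exp hQ0 hQ1 (a := -q) (by linarith)
  rw [e1, e2, e3, ← Real.exp_add, ← Real.exp_add, ← Real.exp_sub, thS]
  congr 1
  simp only [neg_mul, sub_neg_eq_add]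
  ring

/-- the theta ratio tends to 1 -/
lemma tendsto_theta_ratio (hα : -1 < α) :
    Tendsto (fun q : ℝ => qPochInf (-q ^ (-(2*α+1))) (q^2) * qPochInf (-q ^ (2*α+3)) (q^2)
      / (qPochInf (-q) (q^2) * qPochInf (-q) (q^2))) F1 (nhds 1) := by
  -- the error term tends to 0
  have hE : Tendsto (fun q : ℝ =>
      (q ^ (-(2*α+1)) + q ^ (2*α+3) - 2*q) * (1 - q^2)⁻¹) F1 (nhds 0) := by
    have h1 := tendsto_qnum2 (-(2*α+1))
    have h2 := tendsto_qnum2 (2*α+3)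
    have h3 := tendsto_qnum2 1
    have hcomb := ((h3.const_mul 2).sub h1).sub h2
    have : (2 : ℝ) * (1/2) - (-(2*α+1))/2 - (2*α+3)/2 = 0 := by ring
    rw [this] at hcomb
    apply hcomb.congr'
    filter_upwards [eventually_mem_nhdsWithin] with q hq
    have h3' : (1:ℝ) - q ^ (2:ℕ) ≠ 0 := by
      have : q ^ (2:ℕ) < 1 := pow_lt_one₀ hq.1.le hq.2 two_ne_zero
      intro h; linarith [this]
    rw [Real.rpow_one]
    field_simp
    ring
  -- squeeze thS to 0
  have hS : Tendsto (fun q : ℝ => thS α q) F1 (nhds 0) := by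
    apply tendsto_of_tendsto_of_tendsto_of_le_of_le' tendsto_const_nhds hE
    · filter_upwards [eventually_mem_nhdsWithin] with q hq
      exact (thS_bounds hq.1 hq.2).1
    · filter_upwards [eventually_mem_nhdsWithin] with q hq
      exact (thS_bounds hq.1 hq.2).2
  have := (Real.continuous_exp.tendsto 0).comp hS
  rw [Real.exp_zero] at this
  apply this.congr'
  filter_upwards [eventually_mem_nhdsWithin] with q hq
  exact (ratio_eq_exp hα hq.1 hq.2).symm
end theta
section assembly
variable {α : ℝ}

/-- the product form of `(1-q²)^{α+1} · c_α²` -/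
def Yfun (α : ℝ) (q : ℝ) : ℝ :=
  ((1 + q) / 2) * (qPochInf (-q ^ (-(2*α+1))) (q^2) * qPochInf (-q ^ (2*α+3)) (q^2)
      / (qPochInf (-q) (q^2) * qPochInf (-q) (q^2)))
    * (qGammaF (q^2) (α+1))⁻¹

lemma tendsto_Yfun (hα : -1 < α) :
    Tendsto (Yfun α) F1 (nhds ((Real.Gamma (α+1))⁻¹)) := by
  have hz : (0:ℝ) < α + 1 := by linarith
  have h1 : Tendsto (fun q : ℝ => (1 + q) / 2) F1 (nhds 1) := by
    have h := ((tendsto_const_nhds (x := (1:ℝ))).add tendsto_id_F1).div_const (2:ℝ)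
    have e : ((1:ℝ) + 1) / 2 = 1 := by norm_num
    rw [e] at h
    exact h
  have hsq : Tendsto (fun q : ℝ => q ^ 2) F1 F1 := by
    apply tendsto_nhdsWithin_of_tendsto_nhds_of_eventually_within
    · have hp : Tendsto (fun x : ℝ => x ^ 2) (nhds 1) (nhds 1) := by
        have := (continuous_pow 2).tendsto (1:ℝ)
        rwa [one_pow] at this
      exact (hp.comp tendsto_id_F1).congr (fun q => rfl)
    · filter_upwards [eventually_mem_nhdsWithin] with q hq
      exact ⟨pow_pos hq.1 2, pow_lt_one₀ hq.1.le hq.2 two_ne_zero⟩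
  have h3 : Tendsto (fun q : ℝ => qGammaF (q^2) (α+1)) F1 (nhds (Real.Gamma (α+1))) :=
    (tendsto_qGammaF hz).comp hsq
  have h3' := h3.inv₀ (Real.Gamma_pos_of_pos hz).ne'
  have := (h1.mul (tendsto_theta_ratio hα)).mul h3'
  rw [mul_one, one_mul] at this
  exact this

lemma Yfun_eq (hα : -1 < α) (hq0 : 0 < q) (hq1 : q < 1) :
    (1 - q ^ 2) ^ (α + 1) *
      (qPochInf (-q ^ (-(2 * α + 1))) (q ^ 2) * qPochInf (-q ^ (2 * α + 3)) (q ^ 2) *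
          qPochInf (q ^ (2 * α + 2)) (q ^ 2) /
        (2 * (1 - q) *
          (qPochInf (-q) (q ^ 2) * qPochInf (-q) (q ^ 2) * qPochInf (q ^ 2) (q ^ 2))))
      = Yfun α q := by
  have hQ0 : 0 < q^2 := pow_pos hq0 2
  have hQ1 : q^2 < 1 := pow_lt_one₀ hq0.le hq1 two_ne_zero
  have ht : (0:ℝ) < 1 - q^2 := by linarith
  have hD : 0 < qPochInf (-q) (q^2) := qPochInf_pos hQ0 hQ1 (by linarith)
  have hE : 0 < qPochInf (q^2) (q^2) := qPochInf_pos hQ0 hQ1 hQ1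
  have hC : 0 < qPochInf (q ^ (2*α+2)) (q^2) :=
    qPochInf_pos hQ0 hQ1 (Real.rpow_lt_one hq0.le hq1 (by linarith))
  have hbase : ((q^2:ℝ)) ^ (α+1) = q ^ (2*α+2) := by
    rw [← Real.rpow_natCast q 2, ← Real.rpow_mul hq0.le]
    congr 1
    push_cast
    ring
  have hgam : qGammaF (q^2) (α+1)
      = qPochInf (q^2) (q^2) / qPochInf (q ^ (2*α+2)) (q^2) * (1 - q^2) ^ (-α) := by
    rw [qGammaF, hbase]
    congr 1
    norm_num
  have hrw : (qGammaF (q^2) (α+1))⁻¹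
      = qPochInf (q ^ (2*α+2)) (q^2) / qPochInf (q^2) (q^2) * (1 - q^2) ^ α := by
    rw [hgam, Real.rpow_neg ht.le, mul_inv, inv_inv, inv_div]
  rw [Yfun, hrw]
  have hsplit : (1 - q^2 : ℝ) ^ (α+1) = (1 - q^2) ^ α * (1 - q^2) := by
    rw [Real.rpow_add_one ht.ne']
  rw [hsplit]
  have hfac : (1 - q^2 : ℝ) = (1 - q) * (1 + q) := by ring
  have h1q : (1:ℝ) - q ≠ 0 := by intro h; nlinarith
  field_simp
  nlinarith [hfac, sq_nonneg q]
end assembly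

end QAux
/-- limit of the normalization constant `c_α`. -/
theorem stmt_16 (α : ℝ) (hα : -1 < α) :
    Tendsto (fun q : ℝ => (1 - q ^ 2) ^ ((α + 1) / 2) * cAlpha q α)
      (nhdsWithin 1 (Set.Ioo 0 1))
      (nhds (1 / Real.sqrt (Real.Gamma (α + 1)))) := by
  have hY := QAux.tendsto_Yfun hα
  have hsqrt := (Real.continuous_sqrt.tendsto _).comp hY
  have he : Real.sqrt ((Real.Gamma (α+1))⁻¹) = 1 / Real.sqrt (Real.Gamma (α+1)) := by
    rw [Real.sqrt_inv, one_div]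
  rw [he] at hsqrt
  apply hsqrt.congr'
  filter_upwards [eventually_mem_nhdsWithin] with q hq
  obtain ⟨hq0, hq1⟩ := hq
  have ht : (0:ℝ) < 1 - q^2 := by nlinarith
  have h1 : (1 - q^2 : ℝ) ^ ((α+1)/2) = Real.sqrt ((1-q^2) ^ (α+1)) := by
    rw [Real.sqrt_eq_rpow, ← Real.rpow_mul ht.le]
    congr 1; ring
  simp only [Function.comp_apply, cAlpha]
  rw [h1, ← Real.sqrt_mul (Real.rpow_nonneg ht.le _) _, ← QAux.Yfun_eq hα hq0 hq1]
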